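/- Let n ≥ 2 and let m_1, …, m_n be positive real numbers. Define F : (ℝ²)ⁿ → (ℝ²)ⁿ by F_i(q_1, …, q_n) = q_i − Σ_{j≠i} (m_j / |q_i − q_j|³)(q_i − q_j) on configurations of pairwise distinct points, and let G : (ℝ²)^{n-2} × ℝ → (ℝ²)^{n-2} × ℝ be the reduced map on variables (q_1, …, q_{n-2}, x_{n-1}) obtained by substituting q_{n-1} = (x_{n-1}, 0) and q_n = −(1/m_n)(Σ_{i=1}^{n-2} m_i q_i + m_{n-1}(x_{n-1},0)), whose components are F_i for i = 1, …, n−2 together with the first (x) component of F_{n-1}. Suppose (q_1, …, q_{n-2}, x_{n-1}) is a zero of G at which DG is invertible, the induced points q_1, …, q_n are pairwise distinct, and x_{n-1} ≠ x_n (first coordinates). Then q = (q_1, …, q_{n-2}, (x_{n-1},0), q_n) is a normalized central configuration and it is non-degenerate, i.e. rank DF(q) = 2n − 1. -/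

import Mathlib

open Finset

abbrev E2 : Type := EuclideanSpace ℝ (Fin 2)

/-- The point `(a, b)` of the Euclidean plane. -/
noncomputable def pt (a b : ℝ) : E2 := (WithLp.equiv 2 (Fin 2 → ℝ)).symm ![a, b]

/-- `F_i(q) = q_i − Σ_{j≠i} (m_j / |q_i − q_j|³)(q_i − q_j)`; normalized central
configurations are the (pairwise distinct) zeros of `F`. -/
noncomputable def Fmap {ι : Type} [Fintype ι] [DecidableEq ι] (m : ι → ℝ) (q : ι → E2) :
    ι → E2 :=
  fun i => q i - ∑ j ∈ Finset.univ.filter (· ≠ i), (m j / ‖q i - q j‖ ^ 3) • (q i - q j)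

/-- The configuration of `n + 2` bodies built from the reduced variables
`(q_1, …, q_n, x_{n+1})`: body `n` (0-based) is `(x, 0)` and the last body is obtained
from the center-of-mass relation. -/
noncomputable def redConfig (n : ℕ) (m : Fin (n + 2) → ℝ) (z : (Fin n → E2) × ℝ) :
    Fin (n + 2) → E2 :=
  Fin.snoc (Fin.snoc z.1 (pt z.2 0))
    ((-(m (Fin.last (n + 1)))⁻¹) •
      (∑ i : Fin n, m i.castSucc.castSucc • z.1 i + m ((Fin.last n).castSucc) • pt z.2 0))

/-- The reduced map `G`: the components `F_i` for the first `n` bodies and the first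
(`x`) component of `F` at body `n`, evaluated on the reduced configuration. -/
noncomputable def Gmap (n : ℕ) (m : Fin (n + 2) → ℝ) (z : (Fin n → E2) × ℝ) :
    (Fin n → E2) × ℝ :=
  (fun i => Fmap m (redConfig n m z) i.castSucc.castSucc,
   Fmap m (redConfig n m z) ((Fin.last n).castSucc) 0)

/-! ### Auxiliary lemmas -/

theorem pt_app0 (a b : ℝ) : pt a b 0 = a := rfl
theorem pt_app1 (a b : ℝ) : pt a b 1 = b := rfl

theorem e2_ext {x y : E2} (h0 : x 0 = y 0) (h1 : x 1 = y 1) : x = y := by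
  refine PiLp.ext fun k => ?_
  match k with
  | ⟨0, _⟩ => exact h0
  | ⟨1, _⟩ => exact h1

theorem pt_add0 (a b : ℝ) : pt (a + b) 0 = pt a 0 + pt b 0 :=
  e2_ext (by simp [pt_app0, PiLp.add_apply]) (by simp [pt_app1, PiLp.add_apply])
theorem pt_smul0 (c a : ℝ) : pt (c * a) 0 = c • pt a 0 :=
  e2_ext (by simp [pt_app0, PiLp.smul_apply]) (by simp [pt_app1, PiLp.smul_apply])

/-- antisymmetric double sums vanish -/
theorem sum_antisym {ι M : Type*} [Fintype ι] [DecidableEq ι] [AddCommGroup M] [Module ℝ M]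
    (f : ι → ι → M) (h : ∀ i j, f j i = - f i j) :
    ∑ i, ∑ j ∈ Finset.univ.filter (· ≠ i), f i j = 0 := by
  have key : ∑ i, ∑ j ∈ Finset.univ.filter (· ≠ i), f i j
      = - ∑ i, ∑ j ∈ Finset.univ.filter (· ≠ i), f i j := by
    calc ∑ i, ∑ j ∈ Finset.univ.filter (· ≠ i), f i j
        = ∑ i, ∑ j, if j ≠ i then f i j else 0 := by
          simp [Finset.sum_filter]
      _ = ∑ j, ∑ i, if j ≠ i then f i j else 0 := Finset.sum_comm
      _ = - ∑ i, ∑ j ∈ Finset.univ.filter (· ≠ i), f i j := by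
          rw [← Finset.sum_neg_distrib]
          refine Finset.sum_congr rfl fun j _ => ?_
          rw [← Finset.sum_neg_distrib, Finset.sum_filter]
          refine Finset.sum_congr rfl fun i _ => ?_
          by_cases hij : j ≠ i
          · rw [if_pos hij, if_pos (Ne.symm hij), h]
          · push_neg at hij
            rw [if_neg (by simp [hij]), if_neg (by simp [hij])]
  have h2 : (2:ℝ) • (∑ i, ∑ j ∈ Finset.univ.filter (· ≠ i), f i j) = 0 := by
    rw [two_smul]; nth_rewrite 2 [key]; simp
  have := smul_eq_zero.mp h2
  simpa using this

/-- the total-momentum identity for `Fmap`. -/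
theorem sum_smul_Fmap {ι : Type} [Fintype ι] [DecidableEq ι] (m : ι → ℝ) (q : ι → E2) :
    ∑ i, m i • Fmap m q i = ∑ i, m i • q i := by
  unfold Fmap
  have h1 : ∀ i, m i • (q i - ∑ j ∈ Finset.univ.filter (· ≠ i), (m j / ‖q i - q j‖ ^ 3) • (q i - q j))
      = m i • q i - ∑ j ∈ Finset.univ.filter (· ≠ i), m i • ((m j / ‖q i - q j‖ ^ 3) • (q i - q j)) := by
    intro i; rw [smul_sub, Finset.smul_sum]
  simp only [h1, Finset.sum_sub_distrib]
  rw [sum_antisym (f := fun i j => m i • ((m j / ‖q i - q j‖ ^ 3) • (q i - q j)))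
    (fun i j => by
      show m j • ((m i / ‖q j - q i‖ ^ 3) • (q j - q i)) = -(m i • ((m j / ‖q i - q j‖ ^ 3) • (q i - q j)))
      rw [smul_smul, smul_smul, norm_sub_rev (q j) (q i),
        show q i - q j = -(q j - q i) by abel, smul_neg, neg_neg]
      congr 1; ring), sub_zero]

noncomputable def wedge (u v : E2) : ℝ := u 0 * v 1 - u 1 * v 0

/-- the angular-momentum identity for `Fmap`. -/
theorem sum_wedge_Fmap {ι : Type} [Fintype ι] [DecidableEq ι] (m : ι → ℝ) (q : ι → E2) :
    ∑ i, m i * wedge (q i) (Fmap m q i) = 0 := by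
  unfold Fmap wedge
  have happ : ∀ (i : ι) (k : Fin 2),
      (q i - ∑ j ∈ Finset.univ.filter (· ≠ i), (m j / ‖q i - q j‖ ^ 3) • (q i - q j)) k
      = q i k - ∑ j ∈ Finset.univ.filter (· ≠ i), (m j / ‖q i - q j‖ ^ 3) * (q i k - q j k) := by
    intro i k
    have : (∑ j ∈ Finset.univ.filter (· ≠ i), (m j / ‖q i - q j‖ ^ 3) • (q i - q j)) k
        = ∑ j ∈ Finset.univ.filter (· ≠ i), ((m j / ‖q i - q j‖ ^ 3) • (q i - q j)) k :=
      by rw [WithLp.ofLp_sum]; exact Finset.sum_apply k _ _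
    simp only [PiLp.sub_apply, this, PiLp.smul_apply, smul_eq_mul]
  simp only [happ]
  have h2 : ∀ i, m i * (q i 0 * (q i 1 - ∑ j ∈ Finset.univ.filter (· ≠ i), (m j / ‖q i - q j‖ ^ 3) * (q i 1 - q j 1))
      - q i 1 * (q i 0 - ∑ j ∈ Finset.univ.filter (· ≠ i), (m j / ‖q i - q j‖ ^ 3) * (q i 0 - q j 0)))
      = ∑ j ∈ Finset.univ.filter (· ≠ i),
          (m i * (m j / ‖q i - q j‖ ^ 3)) * (q i 0 * q j 1 - q i 1 * q j 0) := by
    intro i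
    have expand : ∀ (a b S0 S1 : ℝ), m i * (a * (b - S1) - b * (a - S0))
        = m i * b * S0 - m i * a * S1 := fun a b S0 S1 => by ring
    rw [expand, Finset.mul_sum, Finset.mul_sum, ← Finset.sum_sub_distrib]
    exact Finset.sum_congr rfl fun j _ => by ring
  simp only [h2]
  exact sum_antisym (M := ℝ) _ (fun i j => by
    rw [norm_sub_rev (q j) (q i)]; ring)

/-! ### components of the reduced configuration -/

theorem redConfig_castSucc (n : ℕ) (m : Fin (n + 2) → ℝ) (z : (Fin n → E2) × ℝ) (i : Fin n) :
    redConfig n m z i.castSucc.castSucc = z.1 i := by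
  unfold redConfig
  rw [Fin.snoc_castSucc, Fin.snoc_castSucc]

theorem redConfig_nIdx (n : ℕ) (m : Fin (n + 2) → ℝ) (z : (Fin n → E2) × ℝ) :
    redConfig n m z ((Fin.last n).castSucc) = pt z.2 0 := by
  unfold redConfig
  rw [Fin.snoc_castSucc, Fin.snoc_last]

theorem redConfig_last (n : ℕ) (m : Fin (n + 2) → ℝ) (z : (Fin n → E2) × ℝ) :
    redConfig n m z (Fin.last (n + 1)) =
      (-(m (Fin.last (n + 1)))⁻¹) •
      (∑ i : Fin n, m i.castSucc.castSucc • z.1 i + m ((Fin.last n).castSucc) • pt z.2 0) := by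
  unfold redConfig
  rw [Fin.snoc_last]

theorem sum_smul_redConfig (n : ℕ) (m : Fin (n + 2) → ℝ) (hm : m (Fin.last (n+1)) ≠ 0)
    (z : (Fin n → E2) × ℝ) :
    ∑ i, m i • redConfig n m z i = 0 := by
  rw [Fin.sum_univ_castSucc (f := fun i => m i • redConfig n m z i)]
  rw [Fin.sum_univ_castSucc (f := fun (i : Fin (n+1)) => m i.castSucc • redConfig n m z i.castSucc)]
  simp only [redConfig_castSucc, redConfig_nIdx, redConfig_last]
  rw [smul_smul, mul_neg, mul_inv_cancel₀ hm]
  simp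
  abel

/-! ### part 1: the full configuration is a central configuration -/

theorem part1 (n : ℕ) (m : Fin (n + 2) → ℝ) (hm : ∀ i, 0 < m i)
    (z : (Fin n → E2) × ℝ)
    (hG : Gmap n m z = 0)
    (hxn : z.2 ≠ redConfig n m z (Fin.last (n + 1)) 0) :
    Fmap m (redConfig n m z) = 0 := by
  set q := redConfig n m z with hq
  set F := Fmap m q with hF
  have hG1 : ∀ i : Fin n, F i.castSucc.castSucc = 0 := by
    intro i
    have := congrFun (congrArg Prod.fst hG) i
    exact this
  have hG2 : F ((Fin.last n).castSucc) 0 = 0 := by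
    have := congrArg Prod.snd hG
    exact this
  set nIdx := ((Fin.last n).castSucc : Fin (n + 2)) with hnIdx
  set lIdx := (Fin.last (n + 1) : Fin (n + 2)) with hlIdx
  have hml : m lIdx ≠ 0 := (hm lIdx).ne'
  have hS : m nIdx • F nIdx + m lIdx • F lIdx = 0 := by
    have h0 : ∑ i, m i • F i = 0 := by
      rw [hF, sum_smul_Fmap]; exact sum_smul_redConfig n m hml z
    rw [Fin.sum_univ_castSucc (f := fun i => m i • F i),
      Fin.sum_univ_castSucc (f := fun (i : Fin (n+1)) => m i.castSucc • F i.castSucc)] at h0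
    simpa [hG1] using h0
  have hFl : F lIdx = (-(m lIdx)⁻¹ * m nIdx) • F nIdx := by
    have : m lIdx • F lIdx = -(m nIdx • F nIdx) := eq_neg_of_add_eq_zero_left (by rw [← hS]; abel)
    calc F lIdx = (m lIdx)⁻¹ • (m lIdx • F lIdx) := by rw [smul_smul, inv_mul_cancel₀ hml, one_smul]
      _ = (-(m lIdx)⁻¹ * m nIdx) • F nIdx := by
          rw [this, smul_neg, smul_smul, ← neg_smul, neg_mul]
  have hW : m nIdx * wedge (q nIdx) (F nIdx) + m lIdx * wedge (q lIdx) (F lIdx) = 0 := by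
    have h0 : ∑ i, m i * wedge (q i) (F i) = 0 := sum_wedge_Fmap m q
    rw [Fin.sum_univ_castSucc (f := fun i => m i * wedge (q i) (F i)),
      Fin.sum_univ_castSucc (f := fun (i : Fin (n+1)) => m i.castSucc * wedge (q i.castSucc) (F i.castSucc))] at h0
    simpa [hG1, wedge] using h0
  set b := F nIdx 1 with hb
  have hq1 : q nIdx 1 = 0 := by rw [hq, redConfig_nIdx]; rfl
  have hq0 : q nIdx 0 = z.2 := by rw [hq, redConfig_nIdx]; rfl
  have hW2 : m nIdx * (z.2 * b) + m lIdx * ((-(m lIdx)⁻¹ * m nIdx) * (q lIdx 0 * b)) = 0 := by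
    rw [← hW]
    congr 1
    · rw [wedge, hq1, hq0, hG2]; ring
    · rw [wedge, hFl]
      have e0 : ((-(m lIdx)⁻¹ * m nIdx) • F nIdx) 0 = (-(m lIdx)⁻¹ * m nIdx) * F nIdx 0 := rfl
      have e1 : ((-(m lIdx)⁻¹ * m nIdx) • F nIdx) 1 = (-(m lIdx)⁻¹ * m nIdx) * F nIdx 1 := rfl
      rw [e0, e1, hG2, ← hb]; ring
  have hb0 : b = 0 := by
    have hfac : m nIdx * b * (z.2 - q lIdx 0) = 0 := by
      rw [← hW2]; field_simp; ring
    rcases mul_eq_zero.mp hfac with h | h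
    · rcases mul_eq_zero.mp h with h' | h'
      · exact absurd h' (hm nIdx).ne'
      · exact h'
    · exact absurd (sub_eq_zero.mp h) hxn
  have hFn : F nIdx = 0 := by
    refine PiLp.ext fun k => ?_
    fin_cases k
    · exact hG2
    · exact hb0
  have hFl0 : F lIdx = 0 := by rw [hFl, hFn, smul_zero]
  have hall : ∀ i, F i = 0 := by
    intro i
    induction i using Fin.lastCases with
    | last => exact hFl0
    | cast j =>
      induction j using Fin.lastCases with
      | last => exact hFn
      | cast k => exact hG1 k
  funext i
  exact hall i

/-! ### differentiability of `Fmap` -/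

theorem Fmap_differentiableAt {ι : Type} [Fintype ι] [DecidableEq ι] (m : ι → ℝ)
    (q : ι → E2) (hq : Function.Injective q) :
    DifferentiableAt ℝ (Fmap m) q := by
  rw [show Fmap m = fun p (i : ι) => p i - ∑ j ∈ Finset.univ.filter (· ≠ i),
      (m j / ‖p i - p j‖ ^ 3) • (p i - p j) from rfl]
  apply differentiableAt_pi.mpr
  intro i
  apply DifferentiableAt.sub
  · exact (ContinuousLinearMap.proj (R := ℝ) (φ := fun _ : ι => E2) i).differentiableAt
  · apply DifferentiableAt.fun_sum
    intro j hj
    have hji : j ≠ i := by simpa using hj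
    have hL : DifferentiableAt ℝ (fun p : ι → E2 => p i - p j) q := by
      exact ((ContinuousLinearMap.proj (R := ℝ) (φ := fun _ : ι => E2) i).differentiableAt).sub
        ((ContinuousLinearMap.proj (R := ℝ) (φ := fun _ : ι => E2) j).differentiableAt)
    have hne : q i - q j ≠ 0 := sub_ne_zero.mpr fun h => hji (hq (h.symm ▸ rfl)).symm
    have hnorm : DifferentiableAt ℝ (fun p : ι → E2 => ‖p i - p j‖) q := hL.norm ℝ hne
    have hpow : DifferentiableAt ℝ (fun p : ι → E2 => ‖p i - p j‖ ^ 3) q := hnorm.pow 3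
    have hden : (‖q i - q j‖ : ℝ) ^ 3 ≠ 0 := pow_ne_zero 3 (norm_ne_zero_iff.mpr hne)
    have hdiv : DifferentiableAt ℝ (fun p : ι → E2 => m j / ‖p i - p j‖ ^ 3) q :=
      by simp only [div_eq_mul_inv]; exact (hpow.inv hden).const_mul (m j)
    exact hdiv.smul hL

/-! ### rotations and the rotational kernel vector -/

noncomputable def Rot (θ : ℝ) : E2 →ₗ[ℝ] E2 where
  toFun v := pt (Real.cos θ * v 0 - Real.sin θ * v 1) (Real.sin θ * v 0 + Real.cos θ * v 1)
  map_add' u v := by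
    refine e2_ext ?_ ?_ <;>
      simp only [PiLp.add_apply, pt_app0, pt_app1] <;> ring
  map_smul' c v := by
    refine e2_ext ?_ ?_ <;>
      simp only [PiLp.smul_apply, pt_app0, pt_app1, smul_eq_mul, RingHom.id_apply] <;> ring

theorem Rot_app0 (θ : ℝ) (v : E2) : Rot θ v 0 = Real.cos θ * v 0 - Real.sin θ * v 1 := rfl
theorem Rot_app1 (θ : ℝ) (v : E2) : Rot θ v 1 = Real.sin θ * v 0 + Real.cos θ * v 1 := rfl

theorem Rot_norm (θ : ℝ) (v : E2) : ‖Rot θ v‖ = ‖v‖ := by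
  rw [EuclideanSpace.norm_eq, EuclideanSpace.norm_eq]
  congr 1
  rw [Fin.sum_univ_two, Fin.sum_univ_two, Rot_app0, Rot_app1,
    Real.norm_eq_abs, Real.norm_eq_abs, Real.norm_eq_abs, Real.norm_eq_abs,
    sq_abs, sq_abs, sq_abs, sq_abs]
  have h := Real.sin_sq_add_cos_sq θ
  nlinarith [h]

theorem Rot_equivariant {ι : Type} [Fintype ι] [DecidableEq ι] (m : ι → ℝ) (q : ι → E2)
    (θ : ℝ) : Fmap m (fun i => Rot θ (q i)) = fun i => Rot θ (Fmap m q i) := by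
  funext i
  unfold Fmap
  rw [map_sub, map_sum]
  congr 1
  refine Finset.sum_congr rfl fun j _ => ?_
  rw [← map_sub, map_smul, Rot_norm]

theorem Rot_zero_apply (v : E2) : Rot 0 v = v :=
  e2_ext (by rw [Rot_app0]; simp) (by rw [Rot_app1]; simp)

noncomputable def Jmap (v : E2) : E2 := pt (-(v 1)) (v 0)

theorem hasDerivAt_Rot (v : E2) : HasDerivAt (fun θ => Rot θ v) (Jmap v) 0 := by
  set a := v 0
  set b := v 1
  have h0 : HasDerivAt (fun θ : ℝ => Real.cos θ * a - Real.sin θ * b)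
      (-Real.sin 0 * a - Real.cos 0 * b) 0 :=
    ((Real.hasDerivAt_cos 0).mul_const a).sub ((Real.hasDerivAt_sin 0).mul_const b)
  have h1 : HasDerivAt (fun θ : ℝ => Real.sin θ * a + Real.cos θ * b)
      (Real.cos 0 * a + -Real.sin 0 * b) 0 :=
    ((Real.hasDerivAt_sin 0).mul_const a).add ((Real.hasDerivAt_cos 0).mul_const b)
  have h0' : HasDerivAt (fun θ : ℝ => Real.cos θ * a - Real.sin θ * b) (-b) 0 := by
    convert h0 using 1; simp
  have h1' : HasDerivAt (fun θ : ℝ => Real.sin θ * a + Real.cos θ * b) a 0 := by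
    convert h1 using 1; simp
  have hw : HasDerivAt (fun θ : ℝ => (![Real.cos θ * a - Real.sin θ * b,
      Real.sin θ * a + Real.cos θ * b] : Fin 2 → ℝ)) ![-b, a] 0 := by
    apply hasDerivAt_pi.mpr
    intro i
    fin_cases i
    · exact h0'
    · exact h1'
  have := ((PiLp.continuousLinearEquiv 2 ℝ (fun _ : Fin 2 => ℝ)).symm.hasFDerivAt).comp_hasDerivAt 0 hw
  exact this

theorem Fmap_zero_of_rot {ι : Type} [Fintype ι] [DecidableEq ι] (m : ι → ℝ) (q : ι → E2)
    (hF0 : Fmap m q = 0) (θ : ℝ) : Fmap m (fun i => Rot θ (q i)) = 0 := by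
  rw [Rot_equivariant, hF0]
  funext i
  show Rot θ ((0 : ι → E2) i) = 0
  rw [show (0 : ι → E2) i = 0 from rfl, map_zero]

theorem DF_J_mem_ker {ι : Type} [Fintype ι] [DecidableEq ι] (m : ι → ℝ) (q : ι → E2)
    (hdiff : DifferentiableAt ℝ (Fmap m) q) (hF0 : Fmap m q = 0) :
    fderiv ℝ (Fmap m) q (fun i => Jmap (q i)) = 0 := by
  have hF := hdiff.hasFDerivAt
  have hc : HasDerivAt (fun θ => fun i => Rot θ (q i)) (fun i => Jmap (q i)) 0 :=
    hasDerivAt_pi.mpr (fun i => hasDerivAt_Rot (q i))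
  have hc0 : (fun i => Rot 0 (q i)) = q := funext fun i => Rot_zero_apply (q i)
  have hcomp : HasDerivAt (fun θ => Fmap m (fun i => Rot θ (q i)))
      (fderiv ℝ (Fmap m) q (fun i => Jmap (q i))) 0 := by
    have hF' : HasFDerivAt (Fmap m) (fderiv ℝ (Fmap m) q) (fun i => Rot 0 (q i)) := by
      rw [hc0]; exact hF
    exact hF'.comp_hasDerivAt 0 hc
  have hconst : HasDerivAt (fun θ => Fmap m (fun i => Rot θ (q i))) 0 0 := by
    have : (fun θ => Fmap m (fun i => Rot θ (q i))) = fun _ => (0 : ι → E2) :=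
      funext fun θ => Fmap_zero_of_rot m q hF0 θ
    rw [this]; exact hasDerivAt_const 0 0
  exact hcomp.unique hconst

/-! ### the linear maps `ψ`, `π`, `S` -/

noncomputable def psiMap (n : ℕ) (m : Fin (n + 2) → ℝ) :
    ((Fin n → E2) × ℝ) →ₗ[ℝ] (Fin (n + 2) → E2) where
  toFun := redConfig n m
  map_add' z w := by
    funext i
    unfold redConfig
    induction i using Fin.lastCases with
    | last =>
      rw [Fin.snoc_last, Pi.add_apply, Fin.snoc_last, Fin.snoc_last]
      rw [show (z + w).2 = z.2 + w.2 from rfl, show (z + w).1 = z.1 + w.1 from rfl]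
      rw [show (∑ i : Fin n, m i.castSucc.castSucc • (z.1 + w.1) i)
        = ∑ i : Fin n, m i.castSucc.castSucc • z.1 i + ∑ i : Fin n, m i.castSucc.castSucc • w.1 i by
          rw [← Finset.sum_add_distrib]; exact Finset.sum_congr rfl fun i _ => by
            rw [Pi.add_apply, smul_add]]
      rw [pt_add0]
      module
    | cast j =>
      rw [Fin.snoc_castSucc, Pi.add_apply, Fin.snoc_castSucc, Fin.snoc_castSucc]
      induction j using Fin.lastCases with
      | last =>
        rw [Fin.snoc_last, Fin.snoc_last, Fin.snoc_last,
          show (z + w).2 = z.2 + w.2 from rfl, pt_add0]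
      | cast k =>
        rw [Fin.snoc_castSucc, Fin.snoc_castSucc, Fin.snoc_castSucc]
        rfl
  map_smul' c z := by
    funext i
    unfold redConfig
    simp only [RingHom.id_apply]
    induction i using Fin.lastCases with
    | last =>
      rw [Fin.snoc_last, Pi.smul_apply, Fin.snoc_last]
      rw [show (c • z).2 = c * z.2 from rfl, show (c • z).1 = c • z.1 from rfl]
      rw [show (∑ i : Fin n, m i.castSucc.castSucc • (c • z.1) i)
        = c • ∑ i : Fin n, m i.castSucc.castSucc • z.1 i by
          rw [Finset.smul_sum]; exact Finset.sum_congr rfl fun i _ => by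
            rw [Pi.smul_apply, smul_comm]]
      rw [pt_smul0]
      module
    | cast j =>
      rw [Fin.snoc_castSucc, Pi.smul_apply, Fin.snoc_castSucc]
      induction j using Fin.lastCases with
      | last =>
        rw [Fin.snoc_last, Fin.snoc_last,
          show (c • z).2 = c * z.2 from rfl, pt_smul0]
      | cast k =>
        rw [Fin.snoc_castSucc, Fin.snoc_castSucc]
        rfl

noncomputable def piMap (n : ℕ) : (Fin (n + 2) → E2) →ₗ[ℝ] ((Fin n → E2) × ℝ) where
  toFun w := (fun i => w i.castSucc.castSucc, w ((Fin.last n).castSucc) 0)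
  map_add' _ _ := rfl
  map_smul' _ _ := rfl

noncomputable def Smap {ι : Type} [Fintype ι] (m : ι → ℝ) : (ι → E2) →ₗ[ℝ] E2 where
  toFun w := ∑ i, m i • w i
  map_add' w w' := by
    rw [← Finset.sum_add_distrib]
    exact Finset.sum_congr rfl fun i _ => by rw [Pi.add_apply, smul_add]
  map_smul' c w := by
    simp only [RingHom.id_apply]
    rw [Finset.smul_sum]
    exact Finset.sum_congr rfl fun i _ => by rw [Pi.smul_apply, smul_comm]

/-! ### main theorem -/

/-- a non-degenerate zero of the reduced map `G` with pairwise distinct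
induced bodies and `x_{n} ≠ x_{n+1}` gives a normalized central configuration which is
non-degenerate, i.e. `rank DF(q) = 2(n+2) − 1`. -/
theorem stmt4 (n : ℕ) (m : Fin (n + 2) → ℝ) (hm : ∀ i, 0 < m i)
    (z : (Fin n → E2) × ℝ)
    (hG : Gmap n m z = 0)
    (hDG : Function.Bijective (fderiv ℝ (Gmap n m) z))
    (hinj : Function.Injective (redConfig n m z))
    (hxn : z.2 ≠ redConfig n m z (Fin.last (n + 1)) 0) :
    Fmap m (redConfig n m z) = 0 ∧
    Module.finrank ℝ
      (LinearMap.range ((fderiv ℝ (Fmap m) (redConfig n m z) :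
        (Fin (n + 2) → E2) →ₗ[ℝ] (Fin (n + 2) → E2)))) = 2 * (n + 2) - 1 := by
  have hF0 := part1 n m hm z hG hxn
  refine ⟨hF0, ?_⟩
  set q := redConfig n m z with hq
  set nIdx := ((Fin.last n).castSucc : Fin (n + 2)) with hnIdx
  set lIdx := (Fin.last (n + 1) : Fin (n + 2)) with hlIdx
  have hml : m lIdx ≠ 0 := (hm lIdx).ne'
  have hdiff : DifferentiableAt ℝ (Fmap m) q := Fmap_differentiableAt m q hinj
  have hFq : HasFDerivAt (Fmap m) (fderiv ℝ (Fmap m) q) q := hdiff.hasFDerivAt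
  set DF := fderiv ℝ (Fmap m) q with hDF
  -- chain rule for G
  set ψc : ((Fin n → E2) × ℝ) →L[ℝ] (Fin (n + 2) → E2) :=
    LinearMap.toContinuousLinearMap (psiMap n m) with hψc
  set πc : (Fin (n + 2) → E2) →L[ℝ] ((Fin n → E2) × ℝ) :=
    LinearMap.toContinuousLinearMap (piMap n) with hπc
  have hψfun : (⇑ψc : ((Fin n → E2) × ℝ) → (Fin (n + 2) → E2)) = redConfig n m := by
    rw [hψc, LinearMap.coe_toContinuousLinearMap']; rfl
  have hψ : HasFDerivAt (redConfig n m) ψc z := by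
    have := ψc.hasFDerivAt (x := z)
    rwa [hψfun] at this
  have hcomp1 : HasFDerivAt (fun y => Fmap m (redConfig n m y)) (DF.comp ψc) z :=
    by exact HasFDerivAt.comp z hFq hψ
  have hGd : HasFDerivAt (Gmap n m) (πc.comp (DF.comp ψc)) z := by
    have h := HasFDerivAt.comp z (πc.hasFDerivAt (x := Fmap m (redConfig n m z))) hcomp1
    have heq : Gmap n m = (⇑πc ∘ fun y => Fmap m (redConfig n m y)) := by
      funext y
      show Gmap n m y = πc (Fmap m (redConfig n m y))
      rw [hπc, LinearMap.coe_toContinuousLinearMap']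
      rfl
    rw [heq]
    exact h
  have hfder : fderiv ℝ (Gmap n m) z = πc.comp (DF.comp ψc) := hGd.fderiv
  rw [hfder] at hDG
  -- the momentum identity for DF
  set Sc : (Fin (n + 2) → E2) →L[ℝ] E2 :=
    LinearMap.toContinuousLinearMap (Smap m) with hSc
  have hScfun : ∀ w, Sc w = ∑ i, m i • w i := fun w => by
    rw [hSc, LinearMap.coe_toContinuousLinearMap']; rfl
  have hSid : Sc.comp DF = Sc := by
    have h1 : HasFDerivAt (fun w => Sc (Fmap m w)) (Sc.comp DF) q :=
      HasFDerivAt.comp q (Sc.hasFDerivAt (x := Fmap m q)) hFq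
    have h2 : (fun w : Fin (n + 2) → E2 => Sc (Fmap m w)) = ⇑Sc := by
      funext w
      rw [hScfun, hScfun]
      exact sum_smul_Fmap m w
    rw [h2] at h1
    exact h1.unique Sc.hasFDerivAt
  have hSv : ∀ v : Fin (n + 2) → E2, DF v = 0 → ∑ i, m i • v i = 0 := by
    intro v hv
    have := ContinuousLinearMap.ext_iff.mp hSid v
    rw [ContinuousLinearMap.comp_apply, hv, map_zero] at this
    rw [← hScfun, ← this]
  -- kernel vectors with vanishing y-coordinate at body n vanish
  have hker : ∀ v : Fin (n + 2) → E2, DF v = 0 → v nIdx 1 = 0 → v = 0 := by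
    intro v hv h1
    set u : (Fin n → E2) × ℝ := (fun i => v i.castSucc.castSucc, v nIdx 0) with hu
    have hSv0 : ∑ i, m i • v i = 0 := hSv v hv
    have hvn : pt (v nIdx 0) 0 = v nIdx := e2_ext rfl (by rw [pt_app1, h1])
    have hψu : redConfig n m u = v := by
      funext i
      induction i using Fin.lastCases with
      | last =>
        rw [redConfig_last]
        have hsplit : ∑ i, m i • v i
            = (∑ i : Fin n, m i.castSucc.castSucc • v i.castSucc.castSucc
              + m nIdx • v nIdx) + m lIdx • v lIdx := by
          rw [Fin.sum_univ_castSucc (f := fun i => m i • v i),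
            Fin.sum_univ_castSucc (f := fun (i : Fin (n+1)) => m i.castSucc • v i.castSucc)]
        have hvl : m lIdx • v lIdx
            = -(∑ i : Fin n, m i.castSucc.castSucc • v i.castSucc.castSucc + m nIdx • v nIdx) := by
          exact eq_neg_of_add_eq_zero_right (by rw [← hsplit]; exact hSv0)
        show (-(m lIdx)⁻¹) • (∑ i : Fin n, m i.castSucc.castSucc • u.1 i + m nIdx • pt u.2 0)
          = v lIdx
        rw [hu]
        show (-(m lIdx)⁻¹) • (∑ i : Fin n, m i.castSucc.castSucc • v i.castSucc.castSucc
          + m nIdx • pt (v nIdx 0) 0) = v lIdx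
        rw [hvn, ← neg_neg (∑ i : Fin n, m i.castSucc.castSucc • v i.castSucc.castSucc
          + m nIdx • v nIdx), ← hvl, smul_neg, neg_smul, neg_neg, smul_smul,
          inv_mul_cancel₀ hml, one_smul]
      | cast j =>
        induction j using Fin.lastCases with
        | last =>
          rw [show ((Fin.last n).castSucc : Fin (n+2)) = nIdx from rfl, redConfig_nIdx]
          exact hvn
        | cast k =>
          rw [redConfig_castSucc]
    have hGu : (πc.comp (DF.comp ψc)) u = 0 := by
      rw [ContinuousLinearMap.comp_apply, ContinuousLinearMap.comp_apply]
      rw [show ψc u = v by rw [← hψu]; exact congrFun hψfun u ▸ rfl]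
      rw [hv, map_zero]
    have hu0 : u = 0 := by
      apply hDG.1
      rw [hGu, map_zero]
    rw [← hψu, show u = 0 from hu0]
    have : redConfig n m (0 : (Fin n → E2) × ℝ) = psiMap n m 0 := rfl
    rw [this, map_zero]
  -- the rotation vector is a nonzero kernel element
  set Jv : Fin (n + 2) → E2 := fun i => Jmap (q i) with hJv
  have hJker : DF Jv = 0 := DF_J_mem_ker m q hdiff hF0
  have hJne : Jv ≠ 0 := by
    have hne : q nIdx ≠ q lIdx := fun h => by
      have : nIdx = lIdx := hinj h
      have : ((Fin.last n).castSucc : Fin (n+2)) ≠ Fin.last (n + 1) := Fin.castSucc_lt_last _ |>.ne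
      exact this (by rw [← hnIdx, ← hlIdx]; exact hinj h)
    have hex : ∃ i, q i ≠ 0 := by
      by_cases h : q nIdx = 0
      · exact ⟨lIdx, fun h' => hne (by rw [h, h'])⟩
      · exact ⟨nIdx, h⟩
    obtain ⟨i, hi⟩ := hex
    intro h
    apply hi
    have hJ0 : pt (-(q i 1)) (q i 0) = (0 : E2) := congrFun h i
    have h0 : -(q i 1) = 0 := by rw [← pt_app0 (-(q i 1)) (q i 0), hJ0]; rfl
    have h1 : q i 0 = 0 := by rw [← pt_app1 (-(q i 1)) (q i 0), hJ0]; rfl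
    exact e2_ext (show q i 0 = (0:E2) 0 from h1) (show q i 1 = (0:E2) 1 from neg_eq_zero.mp h0)
  -- fix the ψc u = v rewrite above
  -- dimension count
  set Dl : (Fin (n + 2) → E2) →ₗ[ℝ] (Fin (n + 2) → E2) := ↑DF with hDl
  have hDlv : ∀ v, Dl v = DF v := fun v => rfl
  set K := LinearMap.ker Dl with hK
  let ev : (Fin (n + 2) → E2) →ₗ[ℝ] ℝ :=
    { toFun := fun v => v nIdx 1, map_add' := fun _ _ => rfl, map_smul' := fun _ _ => rfl }
  have hφinj : Function.Injective (ev.comp K.subtype) := by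
    intro x y hxy
    apply Subtype.ext
    have hx : DF x.1 = 0 := x.2
    have hy : DF y.1 = 0 := y.2
    have hsub : DF (x.1 - y.1) = 0 := by rw [map_sub, hx, hy, sub_zero]
    have h1 : (x.1 - y.1) nIdx 1 = 0 := by
      have : x.1 nIdx 1 = y.1 nIdx 1 := hxy
      show x.1 nIdx 1 - y.1 nIdx 1 = 0
      rw [this, sub_self]
    have := hker (x.1 - y.1) hsub h1
    exact sub_eq_zero.mp this
  have hKle : Module.finrank ℝ K ≤ 1 := by
    have := LinearMap.finrank_le_finrank_of_injective hφinj
    simpa using this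
  have hJmem : Jv ∈ K := LinearMap.mem_ker.mpr (hDlv Jv ▸ hJker)
  have hKpos : 0 < Module.finrank ℝ K := by
    have : Nontrivial K := nontrivial_of_ne ⟨Jv, hJmem⟩ 0
      (fun h => hJne (congrArg Subtype.val h))
    exact Module.finrank_pos
  have hKrank : Module.finrank ℝ K = 1 := le_antisymm hKle hKpos
  have hrn := LinearMap.finrank_range_add_finrank_ker Dl
  have hdim : Module.finrank ℝ (Fin (n + 2) → E2) = 2 * (n + 2) := by
    rw [Module.finrank_pi_fintype ℝ]
    simp [finrank_euclideanSpace_fin]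
    ring
  have hrange : LinearMap.range (DF : (Fin (n + 2) → E2) →ₗ[ℝ] (Fin (n + 2) → E2)) = LinearMap.range Dl := rfl
  rw [hrange]
  rw [hdim, ← hK] at hrn
  omega
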